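/- Let f, f̂ : ℝ^d_{++} → ℝ be convex and positively homogeneous of degree 1 (f(λp) = λf(p) for all λ > 0), and suppose f(p) = f̂(p) for every p in a set P ⊆ ℝ^d_{++}. Then f(p) = f̂(p) for every p in ℝ^d_{++} ∩ int(cl(⋃_{λ>0}{λq : q ∈ P})), where int and cl denote interior and closure. -/

import Mathlib

/-- The strictly positive orthant of `ℝ^d`. -/
def posOrthant (d : ℕ) : Set (EuclideanSpace ℝ (Fin d)) := {p | ∀ i, 0 < p i}

lemma posOrthant_isOpen (d : ℕ) : IsOpen (posOrthant d) := by
  have : posOrthant d = ⋂ i, {p : EuclideanSpace ℝ (Fin d) | 0 < p i} := by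
    ext p; simp [posOrthant]
  rw [this]
  exact isOpen_iInter_of_finite fun i =>
    isOpen_lt continuous_const (EuclideanSpace.proj i).continuous

/-- Key extension step in Theorem 5.1(iii): two convex, positively homogeneous degree-1
functions agreeing on `P` agree on `ℝ^d_{++} ∩ int(cl(cone(P)))`. -/
theorem stmt3 (d : ℕ) (hd : 1 ≤ d)
    (f fhat : EuclideanSpace ℝ (Fin d) → ℝ)
    (hfconv : ConvexOn ℝ (posOrthant d) f)
    (hfhatconv : ConvexOn ℝ (posOrthant d) fhat)
    (hfhom : ∀ p ∈ posOrthant d, ∀ l : ℝ, 0 < l → f (l • p) = l * f p)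
    (hfhathom : ∀ p ∈ posOrthant d, ∀ l : ℝ, 0 < l → fhat (l • p) = l * fhat p)
    (P : Set (EuclideanSpace ℝ (Fin d))) (hPpos : P ⊆ posOrthant d)
    (hagree : ∀ p ∈ P, f p = fhat p) :
    ∀ p ∈ posOrthant d ∩ interior (closure {q : EuclideanSpace ℝ (Fin d) |
        ∃ l : ℝ, 0 < l ∧ ∃ r ∈ P, q = l • r}),
      f p = fhat p := by
  set C : Set (EuclideanSpace ℝ (Fin d)) :=
    {q | ∃ l : ℝ, 0 < l ∧ ∃ r ∈ P, q = l • r} with hC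
  -- C ⊆ posOrthant and f = fhat on C
  have hCpos : C ⊆ posOrthant d := by
    rintro q ⟨l, hl, r, hr, rfl⟩
    intro i
    have := hPpos hr i
    simpa [EuclideanSpace] using mul_pos hl this
  have hCagree : ∀ q ∈ C, f q = fhat q := by
    rintro q ⟨l, hl, r, hr, rfl⟩
    rw [hfhom r (hPpos hr) l hl, hfhathom r (hPpos hr) l hl, hagree r hr]
  rintro p ⟨hp, hpint⟩
  -- p is in the closure of C ∩ interior (closure C)
  have hmem : p ∈ closure (C ∩ interior (closure C)) := by
    rw [mem_closure_iff]
    intro U hU hpU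
    have h1 : p ∈ U ∩ interior (closure C) := ⟨hpU, hpint⟩
    have h2 : IsOpen (U ∩ interior (closure C)) := hU.inter isOpen_interior
    have hpc : p ∈ closure C := interior_subset hpint
    rw [mem_closure_iff] at hpc
    obtain ⟨q, hq1, hq2⟩ := hpc _ h2 h1
    exact ⟨q, ⟨hq1.1, hq2, hq1.2⟩⟩
  -- restrict further to posOrthant
  have hmem' : p ∈ closure (C ∩ (posOrthant d ∩ interior (closure C))) := by
    have : C ∩ interior (closure C) ⊆ C ∩ (posOrthant d ∩ interior (closure C)) :=
      fun q ⟨h1, h2⟩ => ⟨h1, hCpos h1, h2⟩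
    exact closure_mono this hmem
  set S := C ∩ (posOrthant d ∩ interior (closure C))
  have hSsub : S ⊆ posOrthant d := fun q hq => hq.2.1
  have hfc : ContinuousOn f (posOrthant d) := hfconv.continuousOn (posOrthant_isOpen d)
  have hfhc : ContinuousOn fhat (posOrthant d) := hfhatconv.continuousOn (posOrthant_isOpen d)
  have hnb : (nhdsWithin p S).NeBot := mem_closure_iff_nhdsWithin_neBot.mp hmem'
  have t1 : Filter.Tendsto f (nhdsWithin p S) (nhds (f p)) :=
    (hfc p hp).mono_left (nhdsWithin_mono p hSsub)
  have t2 : Filter.Tendsto fhat (nhdsWithin p S) (nhds (fhat p)) :=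
    (hfhc p hp).mono_left (nhdsWithin_mono p hSsub)
  have t1' : Filter.Tendsto f (nhdsWithin p S) (nhds (fhat p)) := by
    refine t2.congr' ?_
    filter_upwards [self_mem_nhdsWithin] with q hq using (hCagree q hq.1).symm
  exact tendsto_nhds_unique t1 t1'
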